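/- Menelaus's theorem: Let ABC be a triangle and P, Q, R points on lines BC, CA, AB respectively, none equal to a vertex, with P = B + t_P(C − B), Q = C + t_Q(A − C), R = A + t_R(B − A), t_P, t_Q, t_R ∉ {0,1}. Then P, Q, R are collinear if and only if (t_R/(1−t_R))·(t_P/(1−t_P))·(t_Q/(1−t_Q)) = −1. -/
import Mathlib

noncomputable section

abbrev Pt := EuclideanSpace ℝ (Fin 2)

/-- Menelaus's theorem: points `P`, `Q`, `R` on the lines `BC`, `CA`, `AB` (none a
vertex) are collinear iff the product of the signed division ratios equals `−1`. -/
theorem menelaus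
    (A B C P Q R : Pt)
    (hABC : AffineIndependent ℝ ![A, B, C])
    (tP tQ tR : ℝ)
    (htP0 : tP ≠ 0) (htP1 : tP ≠ 1)
    (htQ0 : tQ ≠ 0) (htQ1 : tQ ≠ 1)
    (htR0 : tR ≠ 0) (htR1 : tR ≠ 1)
    (hP : P = B + tP • (C - B))
    (hQ : Q = C + tQ • (A - C))
    (hR : R = A + tR • (B - A)) :
    Collinear ℝ ({P, Q, R} : Set Pt) ↔
      (tR / (1 - tR)) * (tP / (1 - tP)) * (tQ / (1 - tQ)) = -1 := by
  have h1P : (1 : ℝ) - tP ≠ 0 := sub_ne_zero.mpr (Ne.symm htP1)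
  have h1Q : (1 : ℝ) - tQ ≠ 0 := sub_ne_zero.mpr (Ne.symm htQ1)
  have h1R : (1 : ℝ) - tR ≠ 0 := sub_ne_zero.mpr (Ne.symm htR1)
  -- linear independence of B - A and C - A
  have key : ∀ x y : ℝ, x • (B - A) + y • (C - A) = 0 → x = 0 ∧ y = 0 := by
    intro x y hxy
    have h := affineIndependent_iff.mp hABC Finset.univ ![-(x + y), x, y]
      (by simp [Fin.sum_univ_three])
      (by
        simp [Fin.sum_univ_three]
        have : x • (B - A) + y • (C - A) = (-(x + y)) • A + x • B + y • C := by
          simp [smul_sub, sub_smul, add_smul, neg_smul]; abel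
        rw [this] at hxy
        linear_combination (norm := module) hxy)
    constructor
    · have := h 1 (Finset.mem_univ _); simpa using this
    · have := h 2 (Finset.mem_univ _); simpa using this
  have hQP : Q - P = (tP - 1) • (B - A) + (1 - tQ - tP) • (C - A) := by
    rw [hP, hQ]; module
  have hRP : R - P = (tR - 1 + tP) • (B - A) + (-tP) • (C - A) := by
    rw [hP, hR]; module
  have hPR : P ≠ R := by
    intro h
    have h0 : (tR - 1 + tP) • (B - A) + (-tP) • (C - A) = 0 := by
      rw [← hRP, h, sub_self]
    have := (key _ _ h0).2
    exact htP0 (by linarith)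
  -- collinearity as an existence statement
  have hcol : Collinear ℝ ({P, Q, R} : Set Pt) ↔ ∃ s : ℝ, Q - P = s • (R - P) := by
    constructor
    · intro h
      have hm : Q ∈ line[ℝ, P, R] :=
        h.mem_affineSpan_of_mem_of_ne (by simp) (by simp) (by simp) hPR
      have hQ' : (Q - P) +ᵥ P ∈ line[ℝ, P, R] := by simpa using hm
      rw [vadd_left_mem_affineSpan_pair] at hQ'
      obtain ⟨r, hr⟩ := hQ'
      exact ⟨r, by rw [← hr]; simp⟩
    · rintro ⟨s, hs⟩
      have hQ' : Q ∈ line[ℝ, P, R] := by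
        have : (Q - P) +ᵥ P ∈ line[ℝ, P, R] := by
          rw [vadd_left_mem_affineSpan_pair]
          exact ⟨s, by rw [hs]; simp⟩
        simpa using this
      exact collinear_triple_of_mem_affineSpan_pair (left_mem_affineSpan_pair ℝ P R)
        hQ' (right_mem_affineSpan_pair ℝ P R)
  rw [hcol]
  constructor
  · rintro ⟨s, hs⟩
    rw [hQP, hRP, smul_add, smul_smul, smul_smul] at hs
    have h0 : (tP - 1 - s * (tR - 1 + tP)) • (B - A)
        + (1 - tQ - tP - s * (-tP)) • (C - A) = 0 := by
      rw [sub_smul, sub_smul]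
      linear_combination (norm := module) hs
    obtain ⟨hx, hy⟩ := key _ _ h0
    have hdet : tP * (1 - tP) - (1 - tP - tQ) * (tR - 1 + tP) = 0 := by
      linear_combination (-tP) * hx - (tR - 1 + tP) * hy
    field_simp
    linear_combination hdet
  · intro h
    have hdet : tP * (1 - tP) - (1 - tP - tQ) * (tR - 1 + tP) = 0 := by
      field_simp at h
      linear_combination h
    refine ⟨(1 - tQ - tP) / (-tP), ?_⟩
    rw [hQP, hRP, smul_add, smul_smul, smul_smul]
    have e1 : (1 - tQ - tP) / (-tP) * (tR - 1 + tP) = tP - 1 := by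
      rw [div_mul_eq_mul_div, div_eq_iff (neg_ne_zero.mpr htP0)]
      linear_combination -hdet
    have e2 : (1 - tQ - tP) / (-tP) * (-tP) = 1 - tQ - tP := by
      field_simp
    rw [e1, e2]
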